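/- Let 0 < h < h', let α* be a minimizer of T_h over [0, (s 0)²/2] with α* < (s 0)²/2, and let α** be a minimizer of T_{h'} over [0, (s 0)²/2]. Then α* < α**; that is, the minimizer of T_h is strictly monotonically increasing in h (as long as it is interior). -/

import Mathlib

open Finset Set


/-- The PRO function `T_h(α) = f₁(α) + h·f₂(α)` for Tikhonov regularization. -/
noncomputable def proT (r : ℕ) (hr : 0 < r) (s : Fin r → ℝ) (h : ℝ) (α : ℝ) : ℝ :=
  α ^ 2 / (α + (s ⟨0, hr⟩) ^ 2) ^ 2 + h * ∑ i, (s i) ^ 4 / (α + (s i) ^ 2) ^ 2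

/-- Strict antitonicity of `f₂`. -/
lemma f2_lt {r : ℕ} (hr : 0 < r) (s : Fin r → ℝ) (hpos : ∀ i, 0 < s i)
    {x y : ℝ} (hx : 0 ≤ x) (hxy : x < y) :
    ∑ i, (s i) ^ 4 / (y + (s i) ^ 2) ^ 2 < ∑ i, (s i) ^ 4 / (x + (s i) ^ 2) ^ 2 := by
  have : Nonempty (Fin r) := ⟨⟨0, hr⟩⟩
  refine Finset.sum_lt_sum_of_nonempty Finset.univ_nonempty fun i _ => ?_
  have hs := hpos i
  have h1 : (0:ℝ) < x + (s i) ^ 2 := by positivity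
  refine div_lt_div_of_pos_left (by positivity) (by positivity) ?_
  have : x + (s i) ^ 2 < y + (s i) ^ 2 := by linarith
  exact pow_lt_pow_left₀ this h1.le (by norm_num)

lemma hasDerivAt_proT (r : ℕ) (hr : 0 < r) (s : Fin r → ℝ) (hpos : ∀ i, 0 < s i)
    (h : ℝ) {α : ℝ} (hα : 0 ≤ α) :
    HasDerivAt (proT r hr s h)
      (2 * α * (s ⟨0, hr⟩) ^ 2 / (α + (s ⟨0, hr⟩) ^ 2) ^ 3 +
        h * ∑ i, (-2) * (s i) ^ 4 / (α + (s i) ^ 2) ^ 3) α := by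
  have hden : ∀ i : Fin r, (0:ℝ) < α + (s i) ^ 2 := fun i => by
    have := hpos i; positivity
  have h0 := hden ⟨0, hr⟩
  have hf1 : HasDerivAt (fun x : ℝ => x ^ 2 / (x + (s ⟨0, hr⟩) ^ 2) ^ 2)
      (2 * α * (s ⟨0, hr⟩) ^ 2 / (α + (s ⟨0, hr⟩) ^ 2) ^ 3) α := by
    have hn : HasDerivAt (fun x : ℝ => x ^ 2) (2 * α) α := by
      simpa using hasDerivAt_pow 2 α
    have hd : HasDerivAt (fun x : ℝ => (x + (s ⟨0, hr⟩) ^ 2) ^ 2)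
        (2 * (α + (s ⟨0, hr⟩) ^ 2) ^ 1 * 1) α :=
      ((hasDerivAt_id α).add_const _).pow 2
    have := hn.fun_div hd (by positivity)
    refine this.congr_deriv ?_
    rw [div_eq_div_iff (by positivity) (by positivity)]
    ring
  have hf2 : HasDerivAt (fun x : ℝ => ∑ i, (s i) ^ 4 / (x + (s i) ^ 2) ^ 2)
      (∑ i, (-2) * (s i) ^ 4 / (α + (s i) ^ 2) ^ 3) α := by
    refine HasDerivAt.fun_sum fun i _ => ?_
    have hd : HasDerivAt (fun x : ℝ => (x + (s i) ^ 2) ^ 2)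
        (2 * (α + (s i) ^ 2) ^ 1 * 1) α :=
      ((hasDerivAt_id α).add_const _).pow 2
    have := (hasDerivAt_const α ((s i) ^ 4)).fun_div hd (by have := hden i; positivity)
    refine this.congr_deriv ?_
    have := hden i
    rw [div_eq_div_iff (by positivity) (by positivity)]
    ring
  exact hf1.add (hf2.const_mul h)

/-- If `0 < h < h'`, `α*` is an interior minimizer of `T_h` over
`[0, (s 0)²/2]` and `α**` is a minimizer of `T_{h'}` over the same interval, then
`α* < α**`: the minimizer is strictly monotonically increasing in `h`. -/
theorem proT_minimizer_strictMono_in_h (r : ℕ) (hr : 0 < r) (s : Fin r → ℝ)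
    (hpos : ∀ i, 0 < s i) (hmax : ∀ i, s i ≤ s ⟨0, hr⟩)
    (h h' : ℝ) (hh : 0 < h) (hhh' : h < h')
    (a : ℝ) (ha : a ∈ Set.Icc (0 : ℝ) ((s ⟨0, hr⟩) ^ 2 / 2))
    (hamin : IsMinOn (proT r hr s h) (Set.Icc 0 ((s ⟨0, hr⟩) ^ 2 / 2)) a)
    (haint : a < (s ⟨0, hr⟩) ^ 2 / 2)
    (b : ℝ) (hb : b ∈ Set.Icc (0 : ℝ) ((s ⟨0, hr⟩) ^ 2 / 2))
    (hbmin : IsMinOn (proT r hr s h') (Set.Icc 0 ((s ⟨0, hr⟩) ^ 2 / 2)) b) :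
    a < b := by
  have : Nonempty (Fin r) := ⟨⟨0, hr⟩⟩
  set c := (s ⟨0, hr⟩) ^ 2 with hc
  have hcpos : 0 < c := by have := hpos ⟨0, hr⟩; positivity
  have ha0 : 0 ≤ a := ha.1
  have hb0 : 0 ≤ b := hb.1
  -- Step 1: a ≤ b
  have h1 : proT r hr s h a ≤ proT r hr s h b := hamin hb
  have h2 : proT r hr s h' b ≤ proT r hr s h' a := hbmin ha
  simp only [propext (isMinOn_iff)] at *
  unfold proT at h1 h2
  have hF2 : ∑ i, (s i) ^ 4 / (b + (s i) ^ 2) ^ 2 ≤ ∑ i, (s i) ^ 4 / (a + (s i) ^ 2) ^ 2 := by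
    nlinarith
  have hab : a ≤ b := by
    by_contra hlt
    push_neg at hlt
    exact absurd (f2_lt hr s hpos hb0 hlt) (not_lt.2 hF2)
  rcases eq_or_lt_of_le hab with heq | hlt
  · -- a = b : derivative argument
    exfalso
    subst heq
    rcases eq_or_lt_of_le ha0 with h0 | h0
    · -- a = 0 : T_{h'} has negative derivative at 0, contradicting min at 0
      subst h0
      have hd := hasDerivAt_proT r hr s hpos h' (le_refl 0)
      set D : ℝ := 2 * 0 * c / (0 + c) ^ 3 + h' * ∑ i, (-2) * (s i) ^ 4 / ((0:ℝ) + (s i) ^ 2) ^ 3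
        with hD
      have hDneg : D < 0 := by
        have hsum : ∑ i, (-2) * (s i) ^ 4 / ((0:ℝ) + (s i) ^ 2) ^ 3 < 0 := by
          refine Finset.sum_neg (fun i _ => ?_) Finset.univ_nonempty
          have := hpos i
          have hp : (0:ℝ) < ((0:ℝ) + (s i) ^ 2) ^ 3 := by positivity
          have : (0:ℝ) < 2 * (s i) ^ 4 := by positivity
          rw [div_neg_iff]
          exact Or.inr ⟨by nlinarith [pow_pos this 4], hp⟩
        have : h' * ∑ i, (-2) * (s i) ^ 4 / ((0:ℝ) + (s i) ^ 2) ^ 3 < 0 :=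
          mul_neg_of_pos_of_neg (lt_trans hh hhh') hsum
        have hz : 2 * 0 * c / (0 + c) ^ 3 = (0:ℝ) := by simp
        rw [hD, hz, zero_add]
        exact this
      rw [hasDerivAt_iff_tendsto_slope] at hd
      have hev : ∀ᶠ x in nhdsWithin (0:ℝ) {x | x ≠ 0}, slope (proT r hr s h') 0 x < 0 :=
        hd.eventually_lt_const hDneg
      have hmono : nhdsWithin (0:ℝ) (Set.Ioi 0) ≤ nhdsWithin (0:ℝ) {x | x ≠ 0} :=
        nhdsWithin_mono 0 (fun x hx => ne_of_gt hx)
      have hev2 : ∀ᶠ x in nhdsWithin (0:ℝ) (Set.Ioi 0),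
          slope (proT r hr s h') 0 x < 0 ∧ x ∈ Set.Ioo (0:ℝ) (c / 2) :=
        (hev.filter_mono hmono).and (Ioo_mem_nhdsGT_of_mem ⟨le_refl _, by linarith⟩)
      obtain ⟨x, hx1, hx2⟩ := hev2.exists
      have hxmem : x ∈ Set.Icc (0:ℝ) (c / 2) := ⟨hx2.1.le, hx2.2.le⟩
      have hle := hbmin x hxmem
      have hx0 : 0 < x := hx2.1
      rw [slope_def_field, sub_zero] at hx1
      rcases div_neg_iff.mp hx1 with ⟨_, hneg⟩ | ⟨hnum, _⟩
      · linarith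
      · linarith
    · -- 0 < a < c/2 : interior, derivatives of both vanish
      have hnhds : Set.Icc (0:ℝ) (c / 2) ∈ nhds a := Icc_mem_nhds h0 haint
      have hda := hasDerivAt_proT r hr s hpos h ha0
      have hdb := hasDerivAt_proT r hr s hpos h' ha0
      have hza := (IsMinOn.isLocalMin (isMinOn_iff.mpr hamin) hnhds).hasDerivAt_eq_zero hda
      have hzb := (IsMinOn.isLocalMin (isMinOn_iff.mpr hbmin) hnhds).hasDerivAt_eq_zero hdb
      have hsum : ∑ i, (-2) * (s i) ^ 4 / (a + (s i) ^ 2) ^ 3 < 0 := by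
        refine Finset.sum_neg (fun i _ => ?_) Finset.univ_nonempty
        have := hpos i
        have hp : (0:ℝ) < (a + (s i) ^ 2) ^ 3 := by positivity
        rw [div_neg_iff]
        exact Or.inr ⟨by nlinarith [pow_pos this 4], hp⟩
      linarith [mul_lt_mul_of_neg_right hhh' hsum]
  · exact hlt
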